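/- For every nonzero binary quartic φ and all a, b ∈ ℂ: if a·(-x∂x + 2y∂y)(φ) - 3b·(x∂y)(φ) = 0 and b·(2x∂x - y∂y)(φ) - 3a·(y∂x)(φ) = 0, then a = b = 0. (This is the operator form of the Lemma asserting that (G2,P1) is prolongation-rigid: for every nonzero harmonic curvature φ, the degree-one part a₁^φ = {X ∈ 𝔤₁ : [X,𝔤₋₁] ⊆ ann(φ)} of the Tanaka prolongation vanishes, hence a^φ₊ = 0; the two displayed operators are the images of [a·e10 + b·e11, f10] and [a·e10 + b·e11, f11] under the identification of 𝔤₀ with linear vector fields via Z1 ↦ x∂x + y∂y, Z2 ↦ x∂x, e01 ↦ x∂y, f01 ↦ y∂x.) -/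

import Mathlib

set_option maxHeartbeats 1000000

section Helpers
open MvPolynomial Finsupp




theorem coeff_pderiv' (i : Fin 2) (m : Fin 2 →₀ ℕ) (p : MvPolynomial (Fin 2) ℂ) :
    coeff m (pderiv i p) = (m i + 1 : ℕ) * coeff (m + Finsupp.single i 1) p := by
  induction p using MvPolynomial.induction_on' with
  | monomial s a =>
    rw [pderiv_monomial, coeff_monomial, coeff_monomial]
    by_cases hsi : s i = 0
    · conv_rhs => rw [if_neg (fun h => by
        have := congrArg (fun f => f i) h
        simp [Finsupp.single_apply, hsi] at this)]
      rw [mul_zero]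
      split <;> simp [hsi]
    · by_cases hs : s = m + Finsupp.single i 1
      · rw [if_pos (by subst hs; exact add_tsub_cancel_right _ _), if_pos hs]
        subst hs
        simp [Finsupp.single_apply]
        ring
      · rw [if_neg, if_neg hs, mul_zero]
        intro h
        apply hs
        ext j
        have := congrArg (fun f => f j) h
        simp [Finsupp.single_apply, Finsupp.tsub_apply] at this ⊢
        by_cases hj : i = j
        · subst hj; simp at this ⊢; omega
        · simp [hj] at this ⊢; omega
  | add p q hp hq => simp [hp, hq, mul_add]

theorem coeff_X_pderiv_self (s : Fin 2) (m : Fin 2 →₀ ℕ) (p : MvPolynomial (Fin 2) ℂ) :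
    coeff m (X s * pderiv s p) = (m s : ℂ) * coeff m p := by
  rw [coeff_X_mul']
  by_cases hm : m s = 0
  · rw [if_neg (by simp [Finsupp.mem_support_iff, hm]), hm]; simp
  · rw [if_pos (by simp [Finsupp.mem_support_iff, hm]), coeff_pderiv']
    have h1 : ((m - Finsupp.single s 1 : Fin 2 →₀ ℕ) s) + 1 = m s := by
      simp [Finsupp.tsub_apply, Finsupp.single_apply]; omega
    have h2 : m - Finsupp.single s 1 + Finsupp.single s 1 = m := by
      ext j
      simp [Finsupp.tsub_apply, Finsupp.single_apply]
      by_cases hj : s = j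
      · subst hj; simp; omega
      · simp [hj]
    rw [h1, h2]

theorem coeff_X_pderiv_cross (s t : Fin 2) (i j : ℕ)
    (p : MvPolynomial (Fin 2) ℂ) (hst : s ≠ t) :
    coeff (Finsupp.single s (i+1) + Finsupp.single t j) (X s * pderiv t p)
      = ((j : ℂ) + 1) * coeff (Finsupp.single s i + Finsupp.single t (j+1)) p := by
  rw [coeff_X_mul']
  rw [if_pos (by simp [Finsupp.mem_support_iff, Finsupp.single_apply, hst.symm])]
  rw [coeff_pderiv']
  have h1 : (Finsupp.single s (i+1) + Finsupp.single t j - Finsupp.single s 1)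
      = Finsupp.single s i + Finsupp.single t j := by
    ext k
    simp [Finsupp.tsub_apply, Finsupp.single_apply]
    by_cases hk : s = k
    · subst hk; simp [fun h => hst h]
    · simp [hk]
  rw [h1]
  have h2 : (Finsupp.single s i + Finsupp.single t j) t = j := by
    simp [Finsupp.single_apply, fun h => hst h]
  have h3 : Finsupp.single s i + Finsupp.single t j + Finsupp.single t 1
      = Finsupp.single s i + Finsupp.single t (j+1) := by
    ext k
    simp [Finsupp.single_apply]
    by_cases hk : t = k <;> simp [hk] <;> omega
  rw [h2, h3]
  push_cast
  ring

theorem coeff_X_pderiv_zero (s t : Fin 2) (m : Fin 2 →₀ ℕ)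
    (p : MvPolynomial (Fin 2) ℂ) (hm : m s = 0) :
    coeff m (X s * pderiv t p) = 0 := by
  rw [coeff_X_mul', if_neg (by simp [Finsupp.mem_support_iff, hm])]

theorem deg2 (m : Fin 2 →₀ ℕ) : m.degree = m 0 + m 1 := by
  rw [Finsupp.degree_apply, Finset.sum_subset (Finset.subset_univ _)
    (by intro x _ hx; exact Finsupp.notMem_support_iff.mp hx), Fin.sum_univ_two]

theorem quartic_rep (φ : MvPolynomial (Fin 2) ℂ) (hφ4 : φ.IsHomogeneous 4) :
    φ = ∑ k ∈ Finset.range 5, monomial (Finsupp.single 0 k + Finsupp.single 1 (4-k))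
      (coeff (Finsupp.single 0 k + Finsupp.single 1 (4-k)) φ) := by
  ext m
  rw [coeff_sum]
  simp only [coeff_monomial]
  by_cases hm : m 0 + m 1 = 4
  · have hm' : m = Finsupp.single 0 (m 0) + Finsupp.single 1 (4 - m 0) := by
      ext i
      fin_cases i <;> simp [Finsupp.single_apply] <;> omega
    rw [Finset.sum_eq_single (m 0)]
    · rw [if_pos hm'.symm]
      exact congrArg (fun s => coeff s φ) hm'
    · intro k hk hne
      rw [if_neg]
      intro h
      apply hne
      have := congrArg (fun f => f 0) h
      simpa [Finsupp.single_apply] using this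
    · intro h
      exact absurd (Finset.mem_range.mpr (by omega)) h
  · have hd : m.degree ≠ 4 := by rw [deg2]; exact hm
    rw [Finset.sum_eq_zero, hφ4.coeff_eq_zero hd]
    intro k hk
    rw [if_neg]
    intro h
    apply hm
    have h0 := congrArg (fun f => f 0) h
    have h1 := congrArg (fun f => f 1) h
    simp [Finsupp.single_apply] at h0 h1
    simp at hk
    omega

theorem allzero_of_a (φ : MvPolynomial (Fin 2) ℂ) (a b : ℂ)
    (h1 : C a * (-(X 0 * pderiv 0 φ) + 2 * (X 1 * pderiv 1 φ)) -
        C (3 * b) * (X 0 * pderiv 1 φ) = 0)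
    (ha : a ≠ 0) :
    ∀ k ∈ Finset.range 5,
      coeff (Finsupp.single (0:Fin 2) k + Finsupp.single 1 (4-k)) φ = 0 := by
  rw [show (2:MvPolynomial (Fin 2) ℂ) = C 2 from (map_ofNat _ 2).symm] at h1
  have hx1 := coeff_X_pderiv_cross 0 1 0 3 φ (by decide)
  have hx2 := coeff_X_pderiv_cross 0 1 1 2 φ (by decide)
  have hx3 := coeff_X_pderiv_cross 0 1 2 1 φ (by decide)
  have hx4 := coeff_X_pderiv_cross 0 1 3 0 φ (by decide)
  norm_num at hx1 hx2 hx3 hx4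
  have hx0 := coeff_X_pderiv_zero 0 1 (Finsupp.single (0:Fin 2) 0 + Finsupp.single 1 4) φ
    (by simp [Finsupp.single_apply])
  have g0 := congrArg (coeff (Finsupp.single (0:Fin 2) 0 + Finsupp.single 1 4)) h1
  have g1 := congrArg (coeff (Finsupp.single (0:Fin 2) 1 + Finsupp.single 1 3)) h1
  have g2 := congrArg (coeff (Finsupp.single (0:Fin 2) 2 + Finsupp.single 1 2)) h1
  have g3 := congrArg (coeff (Finsupp.single (0:Fin 2) 3 + Finsupp.single 1 1)) h1
  have g4 := congrArg (coeff (Finsupp.single (0:Fin 2) 4 + Finsupp.single 1 0)) h1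
  simp only [coeff_sub, coeff_add, coeff_neg, coeff_C_mul, coeff_zero,
    coeff_X_pderiv_self, hx0, hx1, hx2, hx3, hx4] at g0 g1 g2 g3 g4
  norm_num [Finsupp.single_apply] at g0 g1 g2 g3 g4
  rw [hx1] at g1
  rw [hx4] at g4
  have c0 : coeff (Finsupp.single (1:Fin 2) 4) φ = 0 := g0.resolve_left ha
  have c1 : coeff (Finsupp.single (0:Fin 2) 1 + Finsupp.single 1 3) φ = 0 := by
    have h : a * (5 * coeff (Finsupp.single (0:Fin 2) 1 + Finsupp.single 1 3) φ) = 0 := by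
      linear_combination g1 + 12 * b * c0
    rcases mul_eq_zero.mp h with h | h
    · exact absurd h ha
    · exact (mul_eq_zero.mp h).resolve_left (by norm_num)
  have c2 : coeff (Finsupp.single (0:Fin 2) 2 + Finsupp.single 1 2) φ = 0 := by
    have h : a * (2 * coeff (Finsupp.single (0:Fin 2) 2 + Finsupp.single 1 2) φ) = 0 := by
      linear_combination g2 + 9 * b * c1
    rcases mul_eq_zero.mp h with h | h
    · exact absurd h ha
    · exact (mul_eq_zero.mp h).resolve_left (by norm_num)
  have c3 : coeff (Finsupp.single (0:Fin 2) 3 + Finsupp.single 1 1) φ = 0 := by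
    have h : a * coeff (Finsupp.single (0:Fin 2) 3 + Finsupp.single 1 1) φ = 0 := by
      linear_combination -g3 - 6 * b * c2
    exact (mul_eq_zero.mp h).resolve_left ha
  have c4 : coeff (Finsupp.single (0:Fin 2) 4) φ = 0 := by
    have h : a * (4 * coeff (Finsupp.single (0:Fin 2) 4) φ) = 0 := by
      linear_combination -g4 - 3 * b * c3
    rcases mul_eq_zero.mp h with h | h
    · exact absurd h ha
    · exact (mul_eq_zero.mp h).resolve_left (by norm_num)
  intro k hk
  rw [Finset.mem_range] at hk
  interval_cases k
  · simpa using c0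
  · simpa using c1
  · simpa using c2
  · simpa using c3
  · simpa using c4


theorem allzero_of_b (φ : MvPolynomial (Fin 2) ℂ) (a b : ℂ)
    (h2 : C b * (2 * (X 0 * pderiv 0 φ) - X 1 * pderiv 1 φ) -
        C (3 * a) * (X 1 * pderiv 0 φ) = 0)
    (hb : b ≠ 0) :
    ∀ k ∈ Finset.range 5,
      coeff (Finsupp.single (0:Fin 2) k + Finsupp.single 1 (4-k)) φ = 0 := by
  rw [show (2:MvPolynomial (Fin 2) ℂ) = C 2 from (map_ofNat _ 2).symm] at h2
  have hy0 : coeff (Finsupp.single (0:Fin 2) 0 + Finsupp.single 1 4) (X 1 * pderiv 0 φ)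
      = 1 * coeff (Finsupp.single (0:Fin 2) 1 + Finsupp.single 1 3) φ := by
    have := coeff_X_pderiv_cross 1 0 3 0 φ (by decide)
    rw [add_comm (Finsupp.single (1:Fin 2) (3+1)), add_comm (Finsupp.single (1:Fin 2) 3)] at this
    norm_num at this ⊢
    exact this
  have hy1 : coeff (Finsupp.single (0:Fin 2) 1 + Finsupp.single 1 3) (X 1 * pderiv 0 φ)
      = 2 * coeff (Finsupp.single (0:Fin 2) 2 + Finsupp.single 1 2) φ := by
    have := coeff_X_pderiv_cross 1 0 2 1 φ (by decide)
    rw [add_comm (Finsupp.single (1:Fin 2) (2+1)), add_comm (Finsupp.single (1:Fin 2) 2)] at this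
    norm_num at this ⊢
    exact this
  have hy2 : coeff (Finsupp.single (0:Fin 2) 2 + Finsupp.single 1 2) (X 1 * pderiv 0 φ)
      = 3 * coeff (Finsupp.single (0:Fin 2) 3 + Finsupp.single 1 1) φ := by
    have := coeff_X_pderiv_cross 1 0 1 2 φ (by decide)
    rw [add_comm (Finsupp.single (1:Fin 2) (1+1)), add_comm (Finsupp.single (1:Fin 2) 1)] at this
    norm_num at this ⊢
    exact this
  have hy3 : coeff (Finsupp.single (0:Fin 2) 3 + Finsupp.single 1 1) (X 1 * pderiv 0 φ)
      = 4 * coeff (Finsupp.single (0:Fin 2) 4 + Finsupp.single 1 0) φ := by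
    have := coeff_X_pderiv_cross 1 0 0 3 φ (by decide)
    rw [add_comm (Finsupp.single (1:Fin 2) (0+1)), add_comm (Finsupp.single (1:Fin 2) 0)] at this
    norm_num at this ⊢
    exact this
  have hy4 := coeff_X_pderiv_zero 1 0 (Finsupp.single (0:Fin 2) 4 + Finsupp.single 1 0) φ
    (by simp [Finsupp.single_apply])
  have g0 := congrArg (coeff (Finsupp.single (0:Fin 2) 0 + Finsupp.single 1 4)) h2
  have g1 := congrArg (coeff (Finsupp.single (0:Fin 2) 1 + Finsupp.single 1 3)) h2
  have g2 := congrArg (coeff (Finsupp.single (0:Fin 2) 2 + Finsupp.single 1 2)) h2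
  have g3 := congrArg (coeff (Finsupp.single (0:Fin 2) 3 + Finsupp.single 1 1)) h2
  have g4 := congrArg (coeff (Finsupp.single (0:Fin 2) 4 + Finsupp.single 1 0)) h2
  simp only [coeff_sub, coeff_add, coeff_neg, coeff_C_mul, coeff_zero,
    coeff_X_pderiv_self, hy0, hy1, hy2, hy3, hy4] at g0 g1 g2 g3 g4
  norm_num [Finsupp.single_apply] at g0 g1 g2 g3 g4
  have c4 : coeff (Finsupp.single (0:Fin 2) 4) φ = 0 := g4.resolve_left hb
  have c3 : coeff (Finsupp.single (0:Fin 2) 3 + Finsupp.single 1 1) φ = 0 := by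
    have h : b * (5 * coeff (Finsupp.single (0:Fin 2) 3 + Finsupp.single 1 1) φ) = 0 := by
      linear_combination g3 + 12 * a * c4
    rcases mul_eq_zero.mp h with h | h
    · exact absurd h hb
    · exact (mul_eq_zero.mp h).resolve_left (by norm_num)
  have c2 : coeff (Finsupp.single (0:Fin 2) 2 + Finsupp.single 1 2) φ = 0 := by
    have h : b * (2 * coeff (Finsupp.single (0:Fin 2) 2 + Finsupp.single 1 2) φ) = 0 := by
      linear_combination g2 + 9 * a * c3
    rcases mul_eq_zero.mp h with h | h
    · exact absurd h hb
    · exact (mul_eq_zero.mp h).resolve_left (by norm_num)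
  have c1 : coeff (Finsupp.single (0:Fin 2) 1 + Finsupp.single 1 3) φ = 0 := by
    have h : b * coeff (Finsupp.single (0:Fin 2) 1 + Finsupp.single 1 3) φ = 0 := by
      linear_combination -g1 - 6 * a * c2
    exact (mul_eq_zero.mp h).resolve_left hb
  have c0 : coeff (Finsupp.single (1:Fin 2) 4) φ = 0 := by
    have h : b * (4 * coeff (Finsupp.single (1:Fin 2) 4) φ) = 0 := by
      linear_combination -g0 - 3 * a * c1
    rcases mul_eq_zero.mp h with h | h
    · exact absurd h hb
    · exact (mul_eq_zero.mp h).resolve_left (by norm_num)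
  intro k hk
  rw [Finset.mem_range] at hk
  interval_cases k
  · simpa using c0
  · simpa using c1
  · simpa using c2
  · simpa using c3
  · simpa using c4

end Helpers

set_option maxHeartbeats 1000000

open MvPolynomial

theorem prolongation_rigid (φ : MvPolynomial (Fin 2) ℂ) (hφ0 : φ ≠ 0)
    (hφ4 : φ.IsHomogeneous 4) (a b : ℂ)
    (h1 : C a * (-(X 0 * pderiv 0 φ) + 2 * (X 1 * pderiv 1 φ)) -
        C (3 * b) * (X 0 * pderiv 1 φ) = 0)
    (h2 : C b * (2 * (X 0 * pderiv 0 φ) - X 1 * pderiv 1 φ) -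
        C (3 * a) * (X 1 * pderiv 0 φ) = 0) :
    a = 0 ∧ b = 0 := by
  by_contra hcon
  have hzero : ∀ k ∈ Finset.range 5,
      coeff (Finsupp.single (0:Fin 2) k + Finsupp.single 1 (4-k)) φ = 0 :=
    (not_and_or.mp hcon).elim
      (fun ha => allzero_of_a φ a b h1 (by simpa using ha))
      (fun hb => allzero_of_b φ a b h2 (by simpa using hb))
  apply hφ0
  rw [quartic_rep φ hφ4]
  apply Finset.sum_eq_zero
  intro k hk
  rw [hzero k hk, monomial_zero]
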